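/- Let t_1, t_2, t_3 be nonnegative integers, not all zero. Consider the order ideal A consisting of all divisors of the monomials x_1 x_2 x_3, ..., x_{3t_1−2} x_{3t_1−1} x_{3t_1}, y_1 y_2^2, ..., y_{2t_2−1} y_{2t_2}^2, z_1^3, ..., z_{t_3}^3, where the x's, y's, and z's are 3t_1 + 2t_2 + t_3 pairwise distinct variables. Then A is a pure order ideal and its h-vector is (1, 3t_1 + 2t_2 + t_3, 3t_1 + 2t_2 + t_3, t_1 + t_2 + t_3). -/
import Mathlib


/-- The degree of a monomial (exponent vector) in `s` variables. -/
def mdeg {s : ℕ} (u : Fin s → ℕ) : ℕ := ∑ i, u i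

/-- A (nonempty, finite) set of monomials is an order ideal if it is closed
under divisibility (componentwise `≤` of exponent vectors). -/
def IsOrderIdeal {s : ℕ} (A : Finset (Fin s → ℕ)) : Prop :=
  A.Nonempty ∧ ∀ u ∈ A, ∀ v : Fin s → ℕ, v ≤ u → v ∈ A

/-- `u` is a maximal element of `A` with respect to divisibility. -/
def IsMaximalIn {s : ℕ} (A : Finset (Fin s → ℕ)) (u : Fin s → ℕ) : Prop :=
  u ∈ A ∧ ∀ v ∈ A, u ≤ v → v = u

/-- An order ideal is pure if all its maximal monomials have the same degree. -/
def IsPure {s : ℕ} (A : Finset (Fin s → ℕ)) : Prop :=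
  ∀ u v : Fin s → ℕ, IsMaximalIn A u → IsMaximalIn A v → mdeg u = mdeg v

/-- The maximal degree of a monomial in `A`. -/
def topDegree {s : ℕ} (A : Finset (Fin s → ℕ)) : ℕ := A.sup mdeg

/-- The number of monomials of degree `i` in `A`. -/
def hVec {s : ℕ} (A : Finset (Fin s → ℕ)) (i : ℕ) : ℕ :=
  (A.filter (fun u => mdeg u = i)).card

/-- The h-vector `(h_0, h_1, ..., h_n)` of `A`, where `n = topDegree A`. -/
def hVector {s : ℕ} (A : Finset (Fin s → ℕ)) : List ℕ :=
  (List.range (topDegree A + 1)).map (hVec A)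

/-- A finite sequence is a pure O-sequence if it is the h-vector of some
pure order ideal of monomials. -/
def IsPureOSequence (h : List ℕ) : Prop :=
  ∃ (s : ℕ) (A : Finset (Fin s → ℕ)), IsOrderIdeal A ∧ IsPure A ∧ hVector A = h

/-- All divisors of a monomial, as a finite set. -/
def divisorSet {s : ℕ} (u : Fin s → ℕ) : Finset (Fin s → ℕ) :=
  Fintype.piFinset (fun i => Finset.range (u i + 1))

/-- The order ideal generated by a finite set of monomials: all their divisors. -/
def generatedIdeal {s : ℕ} (G : Finset (Fin s → ℕ)) : Finset (Fin s → ℕ) :=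
  G.biUnion divisorSet

/-- The generators `x_1 x_2 x_3, ..., x_{3t₁-2} x_{3t₁-1} x_{3t₁},
y_1 y_2², ..., y_{2t₂-1} y_{2t₂}², z_1³, ..., z_{t₃}³` in `3t₁ + 2t₂ + t₃`
distinct variables. -/
def gens10 (t₁ t₂ t₃ : ℕ) : Finset (Fin (3 * t₁ + 2 * t₂ + t₃) → ℕ) :=
  ((Finset.range t₁).image (fun k => (fun i : Fin (3 * t₁ + 2 * t₂ + t₃) =>
      if i.val = 3 * k ∨ i.val = 3 * k + 1 ∨ i.val = 3 * k + 2 then 1 else 0))) ∪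
  ((Finset.range t₂).image (fun k => (fun i : Fin (3 * t₁ + 2 * t₂ + t₃) =>
      if i.val = 3 * t₁ + 2 * k then 1
      else if i.val = 3 * t₁ + 2 * k + 1 then 2 else 0))) ∪
  ((Finset.range t₃).image (fun k => (fun i : Fin (3 * t₁ + 2 * t₂ + t₃) =>
      if i.val = 3 * t₁ + 2 * t₂ + k then 3 else 0)))

section Aux

lemma mem_divisorSet {s : ℕ} {u v : Fin s → ℕ} : v ∈ divisorSet u ↔ v ≤ u := by
  simp [divisorSet, Fintype.mem_piFinset, Nat.lt_succ_iff, Pi.le_def]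

lemma mem_genIdeal {s : ℕ} {G : Finset (Fin s → ℕ)} {u : Fin s → ℕ} :
    u ∈ generatedIdeal G ↔ ∃ g ∈ G, u ≤ g := by
  simp [generatedIdeal, mem_divisorSet]

lemma mdeg_mono {s : ℕ} {u v : Fin s → ℕ} (h : u ≤ v) : mdeg u ≤ mdeg v :=
  Finset.sum_le_sum (fun i _ => h i)

lemma eq_of_le_of_mdeg {s : ℕ} {u v : Fin s → ℕ} (h : u ≤ v) (h2 : mdeg v ≤ mdeg u) : u = v := by
  by_contra hne
  have : ∃ j, u j ≠ v j := by
    by_contra hc; push_neg at hc; exact hne (funext hc)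
  obtain ⟨j, hj⟩ := this
  have : mdeg u < mdeg v :=
    Finset.sum_lt_sum (fun i _ => h i) ⟨j, Finset.mem_univ j, lt_of_le_of_ne (h j) hj⟩
  omega

lemma mdeg_single {s : ℕ} (i : Fin s) (m : ℕ) : mdeg (Pi.single i m) = m := by
  simp [mdeg]

lemma mdeg_add {s : ℕ} (u v : Fin s → ℕ) : mdeg (u + v) = mdeg u + mdeg v := by
  simp [mdeg, Finset.sum_add_distrib]

lemma mdeg_eq_zero {s : ℕ} {u : Fin s → ℕ} (h : mdeg u = 0) : u = 0 := by
  funext j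
  have := Finset.sum_eq_zero_iff.mp h j (Finset.mem_univ j)
  simpa using this

lemma mdeg_eq_sum3 {s : ℕ} {u : Fin s → ℕ} (a b c : Fin s) (hab : a ≠ b) (hac : a ≠ c)
    (hbc : b ≠ c) (h0 : ∀ j, j ≠ a → j ≠ b → j ≠ c → u j = 0) : mdeg u = u a + u b + u c := by
  have h : mdeg u = ∑ j ∈ ({a, b, c} : Finset (Fin s)), u j := by
    refine (Finset.sum_subset (Finset.subset_univ _) ?_).symm
    intro j _ hj
    simp only [Finset.mem_insert, Finset.mem_singleton] at hj
    push_neg at hj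
    exact h0 j hj.1 hj.2.1 hj.2.2
  rw [h, Finset.sum_insert (by simp [hab, hac]), Finset.sum_pair hbc]
  ring

lemma mdeg_eq_sum2 {s : ℕ} {u : Fin s → ℕ} (a b : Fin s) (hab : a ≠ b)
    (h0 : ∀ j, j ≠ a → j ≠ b → u j = 0) : mdeg u = u a + u b := by
  have h : mdeg u = ∑ j ∈ ({a, b} : Finset (Fin s)), u j := by
    refine (Finset.sum_subset (Finset.subset_univ _) ?_).symm
    intro j _ hj
    simp only [Finset.mem_insert, Finset.mem_singleton] at hj
    push_neg at hj
    exact h0 j hj.1 hj.2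
  rw [h, Finset.sum_pair hab]

lemma mdeg_eq_sum1 {s : ℕ} {u : Fin s → ℕ} (a : Fin s)
    (h0 : ∀ j, j ≠ a → u j = 0) : mdeg u = u a := by
  have h : mdeg u = ∑ j ∈ ({a} : Finset (Fin s)), u j := by
    refine (Finset.sum_subset (Finset.subset_univ _) ?_).symm
    intro j _ hj
    simp only [Finset.mem_singleton] at hj
    exact h0 j hj
  rw [h, Finset.sum_singleton]

end Aux

section Gens

def gX (t₁ t₂ t₃ k : ℕ) : Fin (3 * t₁ + 2 * t₂ + t₃) → ℕ :=
  fun i => if i.val = 3 * k ∨ i.val = 3 * k + 1 ∨ i.val = 3 * k + 2 then 1 else 0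
def gY (t₁ t₂ t₃ k : ℕ) : Fin (3 * t₁ + 2 * t₂ + t₃) → ℕ :=
  fun i => if i.val = 3 * t₁ + 2 * k then 1 else if i.val = 3 * t₁ + 2 * k + 1 then 2 else 0
def gZ (t₁ t₂ t₃ k : ℕ) : Fin (3 * t₁ + 2 * t₂ + t₃) → ℕ :=
  fun i => if i.val = 3 * t₁ + 2 * t₂ + k then 3 else 0

lemma gens10_eq (t₁ t₂ t₃ : ℕ) : gens10 t₁ t₂ t₃ =
    ((Finset.range t₁).image (gX t₁ t₂ t₃)) ∪ ((Finset.range t₂).image (gY t₁ t₂ t₃)) ∪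
      ((Finset.range t₃).image (gZ t₁ t₂ t₃)) := rfl

lemma mem_gens10 {t₁ t₂ t₃ : ℕ} {g : Fin (3 * t₁ + 2 * t₂ + t₃) → ℕ} :
    g ∈ gens10 t₁ t₂ t₃ ↔ (∃ k < t₁, g = gX t₁ t₂ t₃ k) ∨ (∃ k < t₂, g = gY t₁ t₂ t₃ k) ∨
      (∃ k < t₃, g = gZ t₁ t₂ t₃ k) := by
  rw [gens10_eq]
  simp only [Finset.mem_union, Finset.mem_image, Finset.mem_range, eq_comm, or_assoc]

lemma gX_eq {t₁ t₂ t₃ k : ℕ} (hk : k < t₁) :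
    gX t₁ t₂ t₃ k = Pi.single ⟨3*k, by omega⟩ 1 + Pi.single ⟨3*k+1, by omega⟩ 1
      + Pi.single ⟨3*k+2, by omega⟩ 1 := by
  funext i
  simp only [gX, Pi.add_apply, Pi.single_apply, Fin.ext_iff]
  split_ifs <;> omega

lemma gY_eq {t₁ t₂ t₃ k : ℕ} (hk : k < t₂) :
    gY t₁ t₂ t₃ k = Pi.single ⟨3*t₁+2*k, by omega⟩ 1 + Pi.single ⟨3*t₁+2*k+1, by omega⟩ 2 := by
  funext i
  simp only [gY, Pi.add_apply, Pi.single_apply, Fin.ext_iff]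
  split_ifs <;> omega

lemma gZ_eq {t₁ t₂ t₃ k : ℕ} (hk : k < t₃) :
    gZ t₁ t₂ t₃ k = Pi.single ⟨3*t₁+2*t₂+k, by omega⟩ 3 := by
  funext i
  simp [gZ, Pi.single_apply, Fin.ext_iff]

lemma mdeg_gX {t₁ t₂ t₃ k : ℕ} (hk : k < t₁) : mdeg (gX t₁ t₂ t₃ k) = 3 := by
  rw [gX_eq hk, mdeg_add, mdeg_add, mdeg_single, mdeg_single, mdeg_single]
lemma mdeg_gY {t₁ t₂ t₃ k : ℕ} (hk : k < t₂) : mdeg (gY t₁ t₂ t₃ k) = 3 := by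
  rw [gY_eq hk, mdeg_add, mdeg_single, mdeg_single]
lemma mdeg_gZ {t₁ t₂ t₃ k : ℕ} (hk : k < t₃) : mdeg (gZ t₁ t₂ t₃ k) = 3 := by
  rw [gZ_eq hk, mdeg_single]

lemma mdeg_of_mem_gens {t₁ t₂ t₃ : ℕ} {g : Fin (3 * t₁ + 2 * t₂ + t₃) → ℕ}
    (hg : g ∈ gens10 t₁ t₂ t₃) : mdeg g = 3 := by
  rcases mem_gens10.mp hg with ⟨k, hk, rfl⟩ | ⟨k, hk, rfl⟩ | ⟨k, hk, rfl⟩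
  exacts [mdeg_gX hk, mdeg_gY hk, mdeg_gZ hk]

lemma gX_inj {t₁ t₂ t₃ : ℕ} {k k' : ℕ} (hk : k < t₁) (hk' : k' < t₁)
    (h : gX t₁ t₂ t₃ k = gX t₁ t₂ t₃ k') : k = k' := by
  by_contra hne
  have := congrFun h ⟨3*k, by omega⟩
  simp only [gX, Fin.val_mk, true_or, if_true] at this
  split_ifs at this <;> omega

lemma gY_inj {t₁ t₂ t₃ : ℕ} {k k' : ℕ} (hk : k < t₂) (hk' : k' < t₂)
    (h : gY t₁ t₂ t₃ k = gY t₁ t₂ t₃ k') : k = k' := by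
  by_contra hne
  have := congrFun h ⟨3*t₁+2*k, by omega⟩
  simp only [gY, Fin.val_mk, true_or, if_true] at this
  split_ifs at this <;> omega

lemma gZ_inj {t₁ t₂ t₃ : ℕ} {k k' : ℕ} (hk : k < t₃) (hk' : k' < t₃)
    (h : gZ t₁ t₂ t₃ k = gZ t₁ t₂ t₃ k') : k = k' := by
  by_contra hne
  have := congrFun h ⟨3*t₁+2*t₂+k, by omega⟩
  simp only [gZ, Fin.val_mk, true_or, if_true] at this
  split_ifs at this <;> omega

lemma gX_ne_gY {t₁ t₂ t₃ : ℕ} {k k' : ℕ} (hk : k < t₁) (hk' : k' < t₂) :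
    gX t₁ t₂ t₃ k ≠ gY t₁ t₂ t₃ k' := by
  intro h
  have := congrFun h ⟨3*t₁+2*k'+1, by omega⟩
  simp only [gX, gY, Fin.val_mk, true_or, if_true] at this
  split_ifs at this <;> omega

lemma gX_ne_gZ {t₁ t₂ t₃ : ℕ} {k k' : ℕ} (hk : k < t₁) (hk' : k' < t₃) :
    gX t₁ t₂ t₃ k ≠ gZ t₁ t₂ t₃ k' := by
  intro h
  have := congrFun h ⟨3*t₁+2*t₂+k', by omega⟩
  simp only [gX, gZ, Fin.val_mk, true_or, if_true] at this
  split_ifs at this <;> omega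

lemma gY_ne_gZ {t₁ t₂ t₃ : ℕ} {k k' : ℕ} (hk : k < t₂) (hk' : k' < t₃) :
    gY t₁ t₂ t₃ k ≠ gZ t₁ t₂ t₃ k' := by
  intro h
  have := congrFun h ⟨3*t₁+2*t₂+k', by omega⟩
  simp only [gY, gZ, Fin.val_mk, true_or, if_true] at this
  split_ifs at this <;> omega

lemma card_gens10 (t₁ t₂ t₃ : ℕ) : (gens10 t₁ t₂ t₃).card = t₁ + t₂ + t₃ := by
  rw [gens10_eq]
  rw [Finset.card_union_of_disjoint, Finset.card_union_of_disjoint]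
  · rw [Finset.card_image_of_injOn, Finset.card_image_of_injOn, Finset.card_image_of_injOn,
      Finset.card_range, Finset.card_range, Finset.card_range]
    · intro k hk k' hk' h
      exact gZ_inj (Finset.mem_range.mp hk) (Finset.mem_range.mp hk') h
    · intro k hk k' hk' h
      exact gY_inj (Finset.mem_range.mp hk) (Finset.mem_range.mp hk') h
    · intro k hk k' hk' h
      exact gX_inj (Finset.mem_range.mp hk) (Finset.mem_range.mp hk') h
  · rw [Finset.disjoint_left]
    rintro g hg hg'
    simp only [Finset.mem_image, Finset.mem_range] at hg hg'
    obtain ⟨k, hk, rfl⟩ := hg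
    obtain ⟨k', hk', h⟩ := hg'
    exact gX_ne_gY hk hk' h.symm
  · rw [Finset.disjoint_left]
    rintro g hg hg'
    simp only [Finset.mem_union, Finset.mem_image, Finset.mem_range] at hg hg'
    obtain ⟨k', hk', h⟩ := hg'
    rcases hg with ⟨k, hk, rfl⟩ | ⟨k, hk, rfl⟩
    · exact gX_ne_gZ hk hk' h.symm
    · exact gY_ne_gZ hk hk' h.symm

lemma exists_gen {t₁ t₂ t₃ : ℕ} (ht : ¬(t₁ = 0 ∧ t₂ = 0 ∧ t₃ = 0)) :
    ∃ g, g ∈ gens10 t₁ t₂ t₃ := by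
  rcases Nat.eq_zero_or_pos t₁ with h1 | h1
  · rcases Nat.eq_zero_or_pos t₂ with h2 | h2
    · rcases Nat.eq_zero_or_pos t₃ with h3 | h3
      · exact absurd ⟨h1, h2, h3⟩ ht
      · exact ⟨gZ t₁ t₂ t₃ 0, mem_gens10.mpr (Or.inr (Or.inr ⟨0, h3, rfl⟩))⟩
    · exact ⟨gY t₁ t₂ t₃ 0, mem_gens10.mpr (Or.inr (Or.inl ⟨0, h2, rfl⟩))⟩
  · exact ⟨gX t₁ t₂ t₃ 0, mem_gens10.mpr (Or.inl ⟨0, h1, rfl⟩)⟩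

end Gens

section Phi2

def phi2 (t₁ t₂ t₃ : ℕ) (i : Fin (3 * t₁ + 2 * t₂ + t₃)) : Fin (3 * t₁ + 2 * t₂ + t₃) → ℕ :=
  fun j =>
    if i.val < 3 * t₁ then
      if (j.val = 3 * (i.val / 3) ∨ j.val = 3 * (i.val / 3) + 1 ∨ j.val = 3 * (i.val / 3) + 2)
          ∧ j.val ≠ i.val then 1 else 0
    else if i.val < 3 * t₁ + 2 * t₂ then
      if (i.val - 3 * t₁) % 2 = 0 then
        if j.val = i.val ∨ j.val = i.val + 1 then 1 else 0
      else if j.val = i.val then 2 else 0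
    else if j.val = i.val then 2 else 0

lemma phi2_mem_deg {t₁ t₂ t₃ : ℕ} (i : Fin (3 * t₁ + 2 * t₂ + t₃)) :
    phi2 t₁ t₂ t₃ i ∈ generatedIdeal (gens10 t₁ t₂ t₃) ∧ mdeg (phi2 t₁ t₂ t₃ i) = 2 := by
  rcases Nat.lt_or_ge i.val (3*t₁) with hi | hi
  · constructor
    · refine mem_genIdeal.mpr ⟨gX t₁ t₂ t₃ (i.val / 3),
        mem_gens10.mpr (Or.inl ⟨_, by omega, rfl⟩), fun j => ?_⟩
      simp only [phi2, gX]
      split_ifs <;> omega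
    · have h3 : i.val % 3 = 0 ∨ i.val % 3 = 1 ∨ i.val % 3 = 2 := by omega
      rcases h3 with hr | hr | hr
      · have he : phi2 t₁ t₂ t₃ i =
            Pi.single (⟨i.val + 1, by omega⟩ : Fin (3*t₁+2*t₂+t₃)) 1 +
            Pi.single (⟨i.val + 2, by omega⟩ : Fin (3*t₁+2*t₂+t₃)) 1 := by
          funext j
          simp only [phi2, Pi.add_apply, Pi.single_apply, Fin.ext_iff, Fin.val_mk]
          split_ifs <;> omega
        rw [he, mdeg_add, mdeg_single, mdeg_single]
      · have he : phi2 t₁ t₂ t₃ i =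
            Pi.single (⟨i.val - 1, by omega⟩ : Fin (3*t₁+2*t₂+t₃)) 1 +
            Pi.single (⟨i.val + 1, by omega⟩ : Fin (3*t₁+2*t₂+t₃)) 1 := by
          funext j
          simp only [phi2, Pi.add_apply, Pi.single_apply, Fin.ext_iff, Fin.val_mk]
          split_ifs <;> omega
        rw [he, mdeg_add, mdeg_single, mdeg_single]
      · have he : phi2 t₁ t₂ t₃ i =
            Pi.single (⟨i.val - 2, by omega⟩ : Fin (3*t₁+2*t₂+t₃)) 1 +
            Pi.single (⟨i.val - 1, by omega⟩ : Fin (3*t₁+2*t₂+t₃)) 1 := by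
          funext j
          simp only [phi2, Pi.add_apply, Pi.single_apply, Fin.ext_iff, Fin.val_mk]
          split_ifs <;> omega
        rw [he, mdeg_add, mdeg_single, mdeg_single]
  · rcases Nat.lt_or_ge i.val (3*t₁+2*t₂) with hi2 | hi2
    · rcases Nat.eq_zero_or_pos ((i.val - 3*t₁) % 2) with hr | hr
      · have he : phi2 t₁ t₂ t₃ i =
            Pi.single i 1 + Pi.single (⟨i.val + 1, by omega⟩ : Fin (3*t₁+2*t₂+t₃)) 1 := by
          funext j
          simp only [phi2, Pi.add_apply, Pi.single_apply, Fin.ext_iff, Fin.val_mk]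
          split_ifs <;> omega
        constructor
        · refine mem_genIdeal.mpr ⟨gY t₁ t₂ t₃ ((i.val - 3*t₁) / 2),
            mem_gens10.mpr (Or.inr (Or.inl ⟨_, by omega, rfl⟩)), fun j => ?_⟩
          simp only [phi2, gY]
          split_ifs <;> omega
        · rw [he, mdeg_add, mdeg_single, mdeg_single]
      · have he : phi2 t₁ t₂ t₃ i = Pi.single i 2 := by
          funext j
          simp only [phi2, Pi.single_apply, Fin.ext_iff]
          split_ifs <;> omega
        constructor
        · refine mem_genIdeal.mpr ⟨gY t₁ t₂ t₃ ((i.val - 3*t₁) / 2),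
            mem_gens10.mpr (Or.inr (Or.inl ⟨_, by omega, rfl⟩)), fun j => ?_⟩
          simp only [phi2, gY]
          split_ifs <;> omega
        · rw [he, mdeg_single]
    · have he : phi2 t₁ t₂ t₃ i = Pi.single i 2 := by
        funext j
        simp only [phi2, Pi.single_apply, Fin.ext_iff]
        split_ifs <;> omega
      constructor
      · refine mem_genIdeal.mpr ⟨gZ t₁ t₂ t₃ (i.val - 3*t₁ - 2*t₂),
          mem_gens10.mpr (Or.inr (Or.inr ⟨_, by omega, rfl⟩)), fun j => ?_⟩
        simp only [phi2, gZ]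
        split_ifs <;> omega
      · rw [he, mdeg_single]

lemma phi2_inj {t₁ t₂ t₃ : ℕ} : Function.Injective (phi2 t₁ t₂ t₃) := by
  intro i i' h
  by_contra hne
  have hv : i.val ≠ i'.val := fun hh => hne (Fin.ext hh)
  rcases Nat.lt_or_ge i.val (3*t₁) with hi | hi
  · rcases Nat.lt_or_ge i'.val (3*t₁) with hi' | hi'
    · -- both x
      by_cases hkk : i.val / 3 = i'.val / 3
      · have e := congrFun h i'
        simp only [phi2, eq_self_iff_true, true_or, or_true, if_true, true_and, and_true] at e
        split_ifs at e <;> omega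
      · obtain ⟨p, hp1, hp2⟩ : ∃ p : Fin (3*t₁+2*t₂+t₃),
            (p.val = 3 * (i.val / 3) ∨ p.val = 3 * (i.val / 3) + 1 ∨ p.val = 3 * (i.val / 3) + 2)
            ∧ p.val ≠ i.val := by
          refine ⟨⟨if i.val = 3 * (i.val / 3) then 3 * (i.val / 3) + 1 else 3 * (i.val / 3),
            by split_ifs <;> omega⟩, ?_, ?_⟩ <;> simp only [Fin.val_mk] <;> split_ifs <;> omega
        have e := congrFun h p
        simp only [phi2, eq_self_iff_true, true_or, or_true, if_true, true_and, and_true] at e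
        split_ifs at e <;> omega
    · -- i x, i' y or z
      have e := congrFun h i'
      simp only [phi2, eq_self_iff_true, true_or, or_true, if_true, true_and, and_true] at e
      split_ifs at e <;> omega
  · rcases Nat.lt_or_ge i'.val (3*t₁) with hi' | hi'
    · -- i y or z, i' x
      have e := congrFun h i
      simp only [phi2, eq_self_iff_true, true_or, or_true, if_true, true_and, and_true] at e
      split_ifs at e <;> omega
    · -- both in y/z regions
      rcases Nat.lt_or_ge i.val (3*t₁+2*t₂) with hi2 | hi2
      · rcases Nat.lt_or_ge i'.val (3*t₁+2*t₂) with hi2' | hi2'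
        · -- both y
          have e := congrFun h i'
          simp only [phi2, eq_self_iff_true, true_or, or_true, if_true, true_and, and_true] at e
          split_ifs at e <;> omega
        · -- i y, i' z
          have e := congrFun h i'
          simp only [phi2, eq_self_iff_true, true_or, or_true, if_true, true_and, and_true] at e
          split_ifs at e <;> omega
      · -- i z
        have e := congrFun h i
        simp only [phi2, eq_self_iff_true, true_or, or_true, if_true, true_and, and_true] at e
        split_ifs at e <;> omega

end Phi2

section Filters

variable {t₁ t₂ t₃ : ℕ}

lemma zero_mem_A (ht : ¬(t₁ = 0 ∧ t₂ = 0 ∧ t₃ = 0)) :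
    (0 : Fin (3 * t₁ + 2 * t₂ + t₃) → ℕ) ∈ generatedIdeal (gens10 t₁ t₂ t₃) := by
  obtain ⟨g, hg⟩ := exists_gen ht
  exact mem_genIdeal.mpr ⟨g, hg, fun j => Nat.zero_le _⟩

lemma filter0 (ht : ¬(t₁ = 0 ∧ t₂ = 0 ∧ t₃ = 0)) :
    (generatedIdeal (gens10 t₁ t₂ t₃)).filter (fun u => mdeg u = 0) = {0} := by
  ext u
  simp only [Finset.mem_filter, Finset.mem_singleton]
  constructor
  · rintro ⟨-, h⟩; exact mdeg_eq_zero h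
  · rintro rfl; exact ⟨zero_mem_A ht, by simp [mdeg]⟩

lemma filter3 :
    (generatedIdeal (gens10 t₁ t₂ t₃)).filter (fun u => mdeg u = 3) = gens10 t₁ t₂ t₃ := by
  ext u
  simp only [Finset.mem_filter]
  constructor
  · rintro ⟨huA, hd⟩
    obtain ⟨g, hg, hle⟩ := mem_genIdeal.mp huA
    have h3 := mdeg_of_mem_gens hg
    have : u = g := eq_of_le_of_mdeg hle (by omega)
    rwa [this]
  · intro hg
    exact ⟨mem_genIdeal.mpr ⟨u, hg, le_refl u⟩, mdeg_of_mem_gens hg⟩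

lemma exists_gen_ge_single (i : Fin (3 * t₁ + 2 * t₂ + t₃)) :
    ∃ g ∈ gens10 t₁ t₂ t₃, Pi.single i (1 : ℕ) ≤ g := by
  rcases Nat.lt_or_ge i.val (3*t₁) with hi | hi
  · refine ⟨gX t₁ t₂ t₃ (i.val / 3), mem_gens10.mpr (Or.inl ⟨_, by omega, rfl⟩), fun j => ?_⟩
    simp only [Pi.single_apply, gX, Fin.ext_iff]
    split_ifs <;> omega
  · rcases Nat.lt_or_ge i.val (3*t₁+2*t₂) with hi2 | hi2
    · refine ⟨gY t₁ t₂ t₃ ((i.val - 3*t₁) / 2),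
        mem_gens10.mpr (Or.inr (Or.inl ⟨_, by omega, rfl⟩)), fun j => ?_⟩
      simp only [Pi.single_apply, gY, Fin.ext_iff]
      split_ifs <;> omega
    · refine ⟨gZ t₁ t₂ t₃ (i.val - 3*t₁ - 2*t₂),
        mem_gens10.mpr (Or.inr (Or.inr ⟨_, by omega, rfl⟩)), fun j => ?_⟩
      simp only [Pi.single_apply, gZ, Fin.ext_iff]
      split_ifs <;> omega

lemma filter1 :
    (generatedIdeal (gens10 t₁ t₂ t₃)).filter (fun u => mdeg u = 1) =
      Finset.univ.image (fun i : Fin (3 * t₁ + 2 * t₂ + t₃) => Pi.single i (1 : ℕ)) := by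
  ext u
  simp only [Finset.mem_filter, Finset.mem_image]
  constructor
  · rintro ⟨huA, hd⟩
    have hne : u ≠ 0 := by
      intro h; rw [h] at hd; simp [mdeg] at hd
    obtain ⟨j, hj⟩ := Function.ne_iff.mp hne
    have hj' : u j ≠ 0 := by simpa using hj
    have hle : Pi.single j 1 ≤ u := by
      intro i
      rcases eq_or_ne i j with rfl | hij
      · simpa [Pi.single_apply] using Nat.one_le_iff_ne_zero.mpr hj'
      · simp [Pi.single_apply, hij]
    exact ⟨j, Finset.mem_univ _, eq_of_le_of_mdeg hle (by rw [mdeg_single]; omega)⟩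
  · rintro ⟨i, -, rfl⟩
    obtain ⟨g, hg, hle⟩ := exists_gen_ge_single i
    exact ⟨mem_genIdeal.mpr ⟨g, hg, hle⟩, mdeg_single i 1⟩

lemma filter2 :
    (generatedIdeal (gens10 t₁ t₂ t₃)).filter (fun u => mdeg u = 2) =
      Finset.univ.image (phi2 t₁ t₂ t₃) := by
  ext u
  simp only [Finset.mem_filter, Finset.mem_image]
  constructor
  · rintro ⟨huA, hd⟩
    obtain ⟨g, hg, hle⟩ := mem_genIdeal.mp huA
    have key : ∀ (j j' : Fin (3 * t₁ + 2 * t₂ + t₃)), j.val = j'.val → u j = u j' :=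
      fun j j' hh => by rw [Fin.ext hh]
    rcases mem_gens10.mp hg with ⟨k, hk, rfl⟩ | ⟨k, hk, rfl⟩ | ⟨k, hk, rfl⟩
    · -- x generator
      obtain ⟨a, hav⟩ : ∃ a : Fin (3*t₁+2*t₂+t₃), a.val = 3*k := ⟨⟨3*k, by omega⟩, rfl⟩
      obtain ⟨b, hbv⟩ : ∃ b : Fin (3*t₁+2*t₂+t₃), b.val = 3*k+1 := ⟨⟨3*k+1, by omega⟩, rfl⟩
      obtain ⟨c, hcv⟩ : ∃ c : Fin (3*t₁+2*t₂+t₃), c.val = 3*k+2 := ⟨⟨3*k+2, by omega⟩, rfl⟩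
      have hab : a ≠ b := fun hh => by rw [hh] at hav; omega
      have hac : a ≠ c := fun hh => by rw [hh] at hav; omega
      have hbc : b ≠ c := fun hh => by rw [hh] at hbv; omega
      have h0 : ∀ j, j ≠ a → j ≠ b → j ≠ c → u j = 0 := by
        intro j hja hjb hjc
        have hv1 : j.val ≠ 3*k := fun hh => hja (Fin.ext (by omega))
        have hv2 : j.val ≠ 3*k+1 := fun hh => hjb (Fin.ext (by omega))
        have hv3 : j.val ≠ 3*k+2 := fun hh => hjc (Fin.ext (by omega))
        have := hle j
        simp only [gX] at this
        split_ifs at this <;> omega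
      have hsum : u a + u b + u c = 2 := by
        rw [← mdeg_eq_sum3 a b c hab hac hbc h0]; exact hd
      have hua : u a ≤ 1 := by
        have := hle a; simp only [gX] at this; split_ifs at this <;> omega
      have hub : u b ≤ 1 := by
        have := hle b; simp only [gX] at this; split_ifs at this <;> omega
      have huc : u c ≤ 1 := by
        have := hle c; simp only [gX] at this; split_ifs at this <;> omega
      have hcase : (u a = 0 ∧ u b = 1 ∧ u c = 1) ∨ (u a = 1 ∧ u b = 0 ∧ u c = 1) ∨
          (u a = 1 ∧ u b = 1 ∧ u c = 0) := by omega
      have hfin : ∀ i : Fin (3*t₁+2*t₂+t₃), i.val = 3*k ∨ i.val = 3*k+1 ∨ i.val = 3*k+2 →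
          (∀ j, u j = if (j.val = 3*k ∨ j.val = 3*k+1 ∨ j.val = 3*k+2) ∧ j.val ≠ i.val
            then 1 else 0) → phi2 t₁ t₂ t₃ i = u := by
        intro i hib hu
        funext j
        rw [hu j]
        simp only [phi2]
        split_ifs <;> omega
      rcases hcase with ⟨h1, h2, h3⟩ | ⟨h1, h2, h3⟩ | ⟨h1, h2, h3⟩
      · refine ⟨a, Finset.mem_univ _, hfin a (by omega) ?_⟩
        intro j
        rcases (show j.val = 3*k ∨ j.val = 3*k+1 ∨ j.val = 3*k+2 ∨
            (j.val ≠ 3*k ∧ j.val ≠ 3*k+1 ∧ j.val ≠ 3*k+2) by omega) with hj | hj | hj | ⟨w1, w2, w3⟩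
        · rw [key j a (by omega), h1]; split_ifs <;> omega
        · rw [key j b (by omega), h2]; split_ifs <;> omega
        · rw [key j c (by omega), h3]; split_ifs <;> omega
        · rw [h0 j (fun hh => w1 (by rw [hh]; omega)) (fun hh => w2 (by rw [hh]; omega))
            (fun hh => w3 (by rw [hh]; omega))]
          split_ifs <;> omega
      · refine ⟨b, Finset.mem_univ _, hfin b (by omega) ?_⟩
        intro j
        rcases (show j.val = 3*k ∨ j.val = 3*k+1 ∨ j.val = 3*k+2 ∨
            (j.val ≠ 3*k ∧ j.val ≠ 3*k+1 ∧ j.val ≠ 3*k+2) by omega) with hj | hj | hj | ⟨w1, w2, w3⟩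
        · rw [key j a (by omega), h1]; split_ifs <;> omega
        · rw [key j b (by omega), h2]; split_ifs <;> omega
        · rw [key j c (by omega), h3]; split_ifs <;> omega
        · rw [h0 j (fun hh => w1 (by rw [hh]; omega)) (fun hh => w2 (by rw [hh]; omega))
            (fun hh => w3 (by rw [hh]; omega))]
          split_ifs <;> omega
      · refine ⟨c, Finset.mem_univ _, hfin c (by omega) ?_⟩
        intro j
        rcases (show j.val = 3*k ∨ j.val = 3*k+1 ∨ j.val = 3*k+2 ∨
            (j.val ≠ 3*k ∧ j.val ≠ 3*k+1 ∧ j.val ≠ 3*k+2) by omega) with hj | hj | hj | ⟨w1, w2, w3⟩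
        · rw [key j a (by omega), h1]; split_ifs <;> omega
        · rw [key j b (by omega), h2]; split_ifs <;> omega
        · rw [key j c (by omega), h3]; split_ifs <;> omega
        · rw [h0 j (fun hh => w1 (by rw [hh]; omega)) (fun hh => w2 (by rw [hh]; omega))
            (fun hh => w3 (by rw [hh]; omega))]
          split_ifs <;> omega
    · -- y generator
      obtain ⟨a, hav⟩ : ∃ a : Fin (3*t₁+2*t₂+t₃), a.val = 3*t₁+2*k := ⟨⟨3*t₁+2*k, by omega⟩, rfl⟩
      obtain ⟨b, hbv⟩ : ∃ b : Fin (3*t₁+2*t₂+t₃), b.val = 3*t₁+2*k+1 :=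
        ⟨⟨3*t₁+2*k+1, by omega⟩, rfl⟩
      have hab : a ≠ b := fun hh => by rw [hh] at hav; omega
      have h0 : ∀ j, j ≠ a → j ≠ b → u j = 0 := by
        intro j hja hjb
        have hv1 : j.val ≠ 3*t₁+2*k := fun hh => hja (Fin.ext (by omega))
        have hv2 : j.val ≠ 3*t₁+2*k+1 := fun hh => hjb (Fin.ext (by omega))
        have := hle j
        simp only [gY] at this
        split_ifs at this <;> omega
      have hsum : u a + u b = 2 := by
        rw [← mdeg_eq_sum2 a b hab h0]; exact hd
      have hua : u a ≤ 1 := by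
        have := hle a; simp only [gY] at this; split_ifs at this <;> omega
      have hub : u b ≤ 2 := by
        have := hle b; simp only [gY] at this; split_ifs at this <;> omega
      rcases (show (u a = 1 ∧ u b = 1) ∨ (u a = 0 ∧ u b = 2) by omega) with ⟨h1, h2⟩ | ⟨h1, h2⟩
      · refine ⟨a, Finset.mem_univ _, ?_⟩
        funext j
        have hval : u j = if j.val = a.val ∨ j.val = a.val + 1 then 1 else 0 := by
          rcases (show j.val = 3*t₁+2*k ∨ j.val = 3*t₁+2*k+1 ∨
              (j.val ≠ 3*t₁+2*k ∧ j.val ≠ 3*t₁+2*k+1) by omega) with hj | hj | ⟨w1, w2⟩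
          · rw [key j a (by omega), h1]; split_ifs <;> omega
          · rw [key j b (by omega), h2]; split_ifs <;> omega
          · rw [h0 j (fun hh => w1 (by rw [hh]; omega)) (fun hh => w2 (by rw [hh]; omega))]
            split_ifs <;> omega
        rw [hval]
        simp only [phi2]
        split_ifs <;> omega
      · refine ⟨b, Finset.mem_univ _, ?_⟩
        funext j
        have hval : u j = if j.val = b.val then 2 else 0 := by
          rcases (show j.val = 3*t₁+2*k ∨ j.val = 3*t₁+2*k+1 ∨
              (j.val ≠ 3*t₁+2*k ∧ j.val ≠ 3*t₁+2*k+1) by omega) with hj | hj | ⟨w1, w2⟩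
          · rw [key j a (by omega), h1]; split_ifs <;> omega
          · rw [key j b (by omega), h2]; split_ifs <;> omega
          · rw [h0 j (fun hh => w1 (by rw [hh]; omega)) (fun hh => w2 (by rw [hh]; omega))]
            split_ifs <;> omega
        rw [hval]
        simp only [phi2]
        split_ifs <;> omega
    · -- z generator
      obtain ⟨c, hcv⟩ : ∃ c : Fin (3*t₁+2*t₂+t₃), c.val = 3*t₁+2*t₂+k :=
        ⟨⟨3*t₁+2*t₂+k, by omega⟩, rfl⟩
      have h0 : ∀ j, j ≠ c → u j = 0 := by
        intro j hjc
        have hv1 : j.val ≠ 3*t₁+2*t₂+k := fun hh => hjc (Fin.ext (by omega))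
        have := hle j
        simp only [gZ] at this
        split_ifs at this <;> omega
      have hsum : u c = 2 := by
        rw [← mdeg_eq_sum1 c h0]; exact hd
      refine ⟨c, Finset.mem_univ _, ?_⟩
      funext j
      have hval : u j = if j.val = c.val then 2 else 0 := by
        rcases eq_or_ne j c with rfl | hj
        · rw [hsum]; split_ifs <;> omega
        · rw [h0 j hj]
          have : j.val ≠ c.val := fun hh => hj (Fin.ext hh)
          split_ifs <;> omega
      rw [hval]
      simp only [phi2]
      split_ifs <;> omega
  · rintro ⟨i, -, rfl⟩
    exact phi2_mem_deg i

end Filters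

section Main

lemma single_one_injective {s : ℕ} :
    Function.Injective (fun i : Fin s => Pi.single i (1 : ℕ)) := by
  intro i j h
  by_contra hne
  have := congrFun h i
  simp [Pi.single_apply, hne] at this

lemma topDegree_A {t₁ t₂ t₃ : ℕ} (ht : ¬(t₁ = 0 ∧ t₂ = 0 ∧ t₃ = 0)) :
    topDegree (generatedIdeal (gens10 t₁ t₂ t₃)) = 3 := by
  apply le_antisymm
  · apply Finset.sup_le
    intro u hu
    obtain ⟨g, hg, hle⟩ := mem_genIdeal.mp hu
    have := mdeg_of_mem_gens hg
    have := mdeg_mono hle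
    omega
  · obtain ⟨g, hg⟩ := exists_gen ht
    have hgA : g ∈ generatedIdeal (gens10 t₁ t₂ t₃) := mem_genIdeal.mpr ⟨g, hg, le_refl g⟩
    calc (3 : ℕ) = mdeg g := (mdeg_of_mem_gens hg).symm
    _ ≤ _ := Finset.le_sup hgA

end Main

/-- The order ideal generated by those monomials is a pure order ideal with
h-vector `(1, 3t₁+2t₂+t₃, 3t₁+2t₂+t₃, t₁+t₂+t₃)`. -/
theorem stmt_10 (t₁ t₂ t₃ : ℕ) (ht : ¬(t₁ = 0 ∧ t₂ = 0 ∧ t₃ = 0)) :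
    IsOrderIdeal (generatedIdeal (gens10 t₁ t₂ t₃)) ∧
    IsPure (generatedIdeal (gens10 t₁ t₂ t₃)) ∧
    hVector (generatedIdeal (gens10 t₁ t₂ t₃)) =
      [1, 3 * t₁ + 2 * t₂ + t₃, 3 * t₁ + 2 * t₂ + t₃, t₁ + t₂ + t₃] := by
  constructor
  · constructor
    · exact ⟨0, zero_mem_A ht⟩
    · intro u hu v hv
      obtain ⟨g, hg, hle⟩ := mem_genIdeal.mp hu
      exact mem_genIdeal.mpr ⟨g, hg, le_trans hv hle⟩
  constructor
  · intro u v hu hv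
    have hmax : ∀ w, IsMaximalIn (generatedIdeal (gens10 t₁ t₂ t₃)) w → mdeg w = 3 := by
      intro w hw
      obtain ⟨g, hg, hle⟩ := mem_genIdeal.mp hw.1
      have hgA : g ∈ generatedIdeal (gens10 t₁ t₂ t₃) := mem_genIdeal.mpr ⟨g, hg, le_refl g⟩
      have := hw.2 g hgA hle
      rw [← this]
      exact mdeg_of_mem_gens hg
    rw [hmax u hu, hmax v hv]
  · rw [hVector, topDegree_A ht]
    have h4 : List.range 4 = [0, 1, 2, 3] := rfl
    rw [show (3 : ℕ) + 1 = 4 from rfl, h4]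
    simp only [List.map_cons, List.map_nil]
    have e0 : hVec (generatedIdeal (gens10 t₁ t₂ t₃)) 0 = 1 := by
      rw [hVec, filter0 ht, Finset.card_singleton]
    have e1 : hVec (generatedIdeal (gens10 t₁ t₂ t₃)) 1 = 3 * t₁ + 2 * t₂ + t₃ := by
      rw [hVec, filter1, Finset.card_image_of_injective _ single_one_injective,
        Finset.card_univ, Fintype.card_fin]
    have e2 : hVec (generatedIdeal (gens10 t₁ t₂ t₃)) 2 = 3 * t₁ + 2 * t₂ + t₃ := by
      rw [hVec, filter2, Finset.card_image_of_injective _ phi2_inj,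
        Finset.card_univ, Fintype.card_fin]
    have e3 : hVec (generatedIdeal (gens10 t₁ t₂ t₃)) 3 = t₁ + t₂ + t₃ := by
      rw [hVec, filter3, card_gens10]
    rw [e0, e1, e2, e3]
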